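/- Let f₀ ∈ L² ∩ L^∞ be a probability density and let X₁, …, Xₙ (n > 1) be i.i.d. with density f₀. With R(u,v) = K_h(u − v) and π₂ the second Hoeffding projection, the degenerate part S₂ = Uₙ^{(2)}(π₂R) of the Hoeffding decomposition of Tₙ(h) satisfies E S₂² ≤ 2 ‖f₀‖₂² ‖K‖₂² / ( n(n−1) h ) for every h > 0. -/

import Mathlib

open MeasureTheory ProbabilityTheory Real Filter
open scoped ENNReal NNReal BigOperators Topology

noncomputable section

/-- The Fourier transform `Fφ(u) = ∫ e^{-ixu} φ(x) dx`. -/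
def FT (φ : ℝ → ℝ) (u : ℝ) : ℂ :=
  ∫ x : ℝ, Complex.exp (-(Complex.I * x * u)) * (φ x)

/-- The Sobolev norm `‖φ‖_{2,α} = ‖Fφ(·)(1+|·|²)^{α/2}‖₂`. -/
def sobNorm (α : ℝ) (φ : ℝ → ℝ) : ℝ :=
  (∫ u : ℝ, ‖FT φ u‖ ^ 2 * (1 + u ^ 2) ^ α) ^ ((1 : ℝ) / 2)

/-- Membership in the Sobolev space `H₂^α` (as a subset of `L²`). -/
def MemSobolev (α : ℝ) (φ : ℝ → ℝ) : Prop :=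
  MemLp φ 2 volume ∧ Integrable (fun u : ℝ => ‖FT φ u‖ ^ 2 * (1 + u ^ 2) ^ α)

/-- `K_h(x) = h⁻¹ K(x/h)`. -/
def Kh (K : ℝ → ℝ) (h x : ℝ) : ℝ := h⁻¹ * K (x / h)

/-- The estimator `Tₙ(h) = (2/(n(n−1))) Σ_{i<j} K_h(Xᵢ − Xⱼ)`. -/
def Tn {Ω : Type*} (K : ℝ → ℝ) (h : ℝ) (n : ℕ) (X : ℕ → Ω → ℝ) (ω : Ω) : ℝ :=
  (2 / ((n : ℝ) * ((n : ℝ) - 1))) *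
    ∑ i ∈ Finset.range n, ∑ j ∈ Finset.Ico (i + 1) n, Kh K h (X i ω - X j ω)

/-- The measure on `ℝ` with Lebesgue density `f₀`. -/
def densMeasure (f₀ : ℝ → ℝ) : Measure ℝ :=
  volume.withDensity (fun x => ENNReal.ofReal (f₀ x))

/-- `f₀` is a probability density. -/
def IsDensity (f₀ : ℝ → ℝ) : Prop :=
  Measurable f₀ ∧ (∀ x, 0 ≤ f₀ x) ∧ ∫ x, f₀ x = 1

/-- Convolution `(f ∗ g)(x) = ∫ f(x − y) g(y) dy`. -/
def conv (f g : ℝ → ℝ) (x : ℝ) : ℝ := ∫ y, f (x - y) * g y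

/-- The essential supremum norm `‖f‖_∞`. -/
def supNormEss (f : ℝ → ℝ) : ℝ := (eLpNorm f ⊤ volume).toReal

/-- First Hoeffding projection `π₁R(x) = E R(x, X₁) − E R(X₁, X₂)`
(expectations under the density `f₀`). -/
def pi1 (f₀ : ℝ → ℝ) (R : ℝ → ℝ → ℝ) (x : ℝ) : ℝ :=
  (∫ z, R x z * f₀ z) - ∫ w, (∫ z, R w z * f₀ z) * f₀ w

/-- Second Hoeffding projection
`π₂R(x,y) = R(x,y) − E R(x, X₁) − E R(y, X₁) + E R(X₁, X₂)`. -/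
def pi2 (f₀ : ℝ → ℝ) (R : ℝ → ℝ → ℝ) (x y : ℝ) : ℝ :=
  R x y - (∫ z, R x z * f₀ z) - (∫ z, R y z * f₀ z) +
    ∫ w, (∫ z, R w z * f₀ z) * f₀ w

/-- The U-statistic `Uₙ⁽²⁾(R) = (2/(n(n−1))) Σ_{i<j} R(Xᵢ, Xⱼ)`. -/
def U2 {Ω : Type*} (R : ℝ → ℝ → ℝ) (n : ℕ) (X : ℕ → Ω → ℝ) (ω : Ω) : ℝ :=
  (2 / ((n : ℝ) * ((n : ℝ) - 1))) *
    ∑ i ∈ Finset.range n, ∑ j ∈ Finset.Ico (i + 1) n, R (X i ω) (X j ω)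

/-- The estimator `T̄ₙ(h) = (2/(n(n−1))) Σ_{i<j} ∫ K_h(x − Xᵢ)K_h(x − Xⱼ) dx`. -/
def Tbar {Ω : Type*} (K : ℝ → ℝ) (h : ℝ) (n : ℕ) (X : ℕ → Ω → ℝ) (ω : Ω) : ℝ :=
  (2 / ((n : ℝ) * ((n : ℝ) - 1))) *
    ∑ i ∈ Finset.range n, ∑ j ∈ Finset.Ico (i + 1) n,
      ∫ x, Kh K h (x - X i ω) * Kh K h (x - X j ω)

lemma sum_pairs' {M : Type*} [AddCommMonoid M] (n : ℕ) (f : ℕ → ℕ → M) :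
    ∑ i ∈ Finset.range n, ∑ j ∈ Finset.Ico (i+1) n, f i j
      = ∑ p ∈ (Finset.range n ×ˢ Finset.range n).filter (fun p => p.1 < p.2), f p.1 p.2 := by
  rw [Finset.sum_filter, Finset.sum_product]
  refine Finset.sum_congr rfl fun i _ => ?_
  rw [← Finset.sum_filter]
  apply Finset.sum_congr _ (fun _ _ => rfl)
  ext j
  simp only [Finset.mem_Ico, Finset.mem_filter, Finset.mem_range]
  omega

lemma integrable_of_bdd' {α : Type*} [MeasurableSpace α] {ν : Measure α} [IsFiniteMeasure ν]
    {f : α → ℝ} {C : ℝ} (hf : Measurable f) (hC : ∀ a, |f a| ≤ C) : Integrable f ν :=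
  (integrable_const C).mono' hf.aestronglyMeasurable
    (ae_of_all _ fun a => by simpa [Real.norm_eq_abs] using hC a)

lemma indep_triple' {Ω : Type} [MeasurableSpace Ω] (P : Measure Ω) [IsProbabilityMeasure P]
    (X : ℕ → Ω → ℝ) (hXm : ∀ i, Measurable (X i))
    (hindep : iIndepFun X P)
    (i j k m : ℕ) (hmi : m ≠ i) (hmj : m ≠ j) (hmk : m ≠ k) :
    IndepFun (fun ω => ((X i ω, X j ω), X k ω)) (X m) P := by
  classical
  have hiS : i ∈ ({i, j, k} : Finset ℕ) := by simp
  have hjS : j ∈ ({i, j, k} : Finset ℕ) := by simp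
  have hkS : k ∈ ({i, j, k} : Finset ℕ) := by simp
  have hdisj : Disjoint ({i, j, k} : Finset ℕ) ({m} : Finset ℕ) := by
    simp only [Finset.disjoint_left, Finset.mem_insert, Finset.mem_singleton]
    rintro a (rfl | rfl | rfl) ha <;> simp_all
  have h1 := hindep.indepFun_finset {i, j, k} {m} hdisj hXm
  have hgl : Measurable (fun v : (∀ x : ({i, j, k} : Finset ℕ), ℝ) =>
      ((v ⟨i, hiS⟩, v ⟨j, hjS⟩), v ⟨k, hkS⟩)) := by fun_prop
  have hgr : Measurable (fun v : (∀ x : ({m} : Finset ℕ), ℝ) =>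
      v ⟨m, Finset.mem_singleton_self m⟩) := by fun_prop
  exact h1.comp hgl hgr

set_option maxHeartbeats 2000000 in
/-- the degenerate part `S₂ = Uₙ⁽²⁾(π₂R)` of the Hoeffding
decomposition of `Tₙ(h)` (with `R(u,v) = K_h(u−v)`) satisfies
`E S₂² ≤ 2 ‖f₀‖₂² ‖K‖₂² / (n(n−1)h)`. -/
theorem degenerate_term_bound
    (K : ℝ → ℝ) (hKm : Measurable K) (hKsym : ∀ x, K (-x) = K x)
    (hKbd : ∃ B, ∀ x, |K x| ≤ B) (hKint : Integrable K) (hK1 : (∫ x, K x) = 1)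
    (hKmom : Integrable (fun x => |K x| * |x|))
    (f₀ : ℝ → ℝ) (hdens : IsDensity f₀) (hL2 : MemLp f₀ 2 volume)
    (hbdd : ∃ B, ∀ x, f₀ x ≤ B)
    (Ω : Type) (_mΩ : MeasurableSpace Ω) (P : Measure Ω) (hP : IsProbabilityMeasure P)
    (X : ℕ → Ω → ℝ) (hXm : ∀ i, Measurable (X i))
    (hindep : iIndepFun X P)
    (hlaw : ∀ i, Measure.map (X i) P = densMeasure f₀)
    (n : ℕ) (hn : 1 < n) (h : ℝ) (hh : 0 < h) :
    (∫ ω, (U2 (pi2 f₀ (fun u v => Kh K h (u - v))) n X ω) ^ 2 ∂P) ≤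
      2 * (∫ x, (f₀ x) ^ 2) * (∫ x, (K x) ^ 2) / ((n : ℝ) * ((n : ℝ) - 1) * h) := by
  classical
  obtain ⟨hf₀m, hf₀nn, hf₀1⟩ := hdens
  obtain ⟨B, hB⟩ := hKbd
  have hB0 : 0 ≤ B := le_trans (abs_nonneg _) (hB 0)
  have hh' : h ≠ 0 := ne_of_gt hh
  have hf₀int : Integrable f₀ := by
    by_contra hc
    rw [integral_undef hc] at hf₀1; norm_num at hf₀1
  set μ : Measure ℝ := densMeasure f₀ with hμdef
  have hμ : ∀ (φ : ℝ → ℝ), ∫ x, φ x ∂μ = ∫ x, f₀ x * φ x := by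
    intro φ
    have hm : Measurable (fun x => Real.toNNReal (f₀ x)) := hf₀m.real_toNNReal
    have h1 : μ = volume.withDensity (fun x => ((f₀ x).toNNReal : ℝ≥0∞)) := rfl
    rw [h1, integral_withDensity_eq_integral_smul hm]
    refine integral_congr_ae (ae_of_all _ fun x => ?_)
    simp [NNReal.smul_def, Real.coe_toNNReal _ (hf₀nn x)]
  haveI hμP : IsProbabilityMeasure μ := by
    constructor
    show (volume.withDensity (fun x => ENNReal.ofReal (f₀ x))) Set.univ = 1
    rw [withDensity_apply _ MeasurableSet.univ, setLIntegral_univ,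
        ← ofReal_integral_eq_lintegral_ofReal hf₀int (ae_of_all _ hf₀nn), hf₀1,
        ENNReal.ofReal_one]
  set R : ℝ → ℝ → ℝ := fun u v => Kh K h (u - v) with hRdef
  have hKhm : Measurable (Kh K h) :=
    measurable_const.mul (hKm.comp (measurable_id.div_const h))
  have hRm : Measurable (fun p : ℝ × ℝ => R p.1 p.2) :=
    hKhm.comp (measurable_fst.sub measurable_snd)
  set Cb : ℝ := h⁻¹ * B with hCbdef
  have hCb0 : 0 ≤ Cb := mul_nonneg (inv_nonneg.mpr hh.le) hB0
  have hKhb : ∀ t, |Kh K h t| ≤ Cb := by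
    intro t
    rw [Kh, abs_mul, abs_inv, abs_of_pos hh]
    exact mul_le_mul_of_nonneg_left (hB _) (inv_nonneg.mpr hh.le)
  have hRb : ∀ x y, |R x y| ≤ Cb := fun x y => hKhb _
  have hRsym : ∀ x y, R x y = R y x := by
    intro x y
    show Kh K h (x - y) = Kh K h (y - x)
    rw [Kh, Kh, show (y - x)/h = -((x - y)/h) by ring, hKsym]
  set g : ℝ → ℝ := fun x => ∫ z, R x z * f₀ z with hgdef
  have hgm : Measurable g := by
    have hsm : StronglyMeasurable (fun p : ℝ × ℝ => R p.1 p.2 * f₀ p.2) :=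
      (hRm.mul (hf₀m.comp measurable_snd)).stronglyMeasurable
    exact hsm.integral_prod_right'.measurable
  have hRf_int : ∀ x : ℝ, Integrable (fun z => R x z * f₀ z) := by
    intro x
    refine hf₀int.bdd_mul (c := Cb)
      ((hKhm.comp (measurable_const.sub measurable_id)).aestronglyMeasurable)
      (ae_of_all _ fun z => ?_)
    simpa [Real.norm_eq_abs] using hRb x z
  have habs : ∀ (ψ : ℝ → ℝ), Measurable ψ → (∀ z, |ψ z| ≤ Cb) →
      |∫ z, ψ z * f₀ z| ≤ Cb := by
    intro ψ hψm hψb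
    have h1 : |∫ z, ψ z * f₀ z| ≤ ∫ z, |ψ z| * |f₀ z| := by
      simpa [Real.norm_eq_abs] using
        norm_integral_le_integral_norm (fun z => ψ z * f₀ z) (μ := volume)
    refine h1.trans ?_
    have h2 : ∫ z, |ψ z| * |f₀ z| ≤ ∫ z, Cb * f₀ z := by
      refine integral_mono_of_nonneg (ae_of_all _ fun z => ?_)
        (hf₀int.const_mul Cb) (ae_of_all _ fun z => ?_)
      · exact mul_nonneg (abs_nonneg _) (abs_nonneg _)
      · simp only
        rw [abs_of_nonneg (hf₀nn z)]
        exact mul_le_mul_of_nonneg_right (hψb z) (hf₀nn z)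
    calc ∫ z, |ψ z| * |f₀ z| ≤ ∫ z, Cb * f₀ z := h2
      _ = Cb := by rw [integral_const_mul, hf₀1, mul_one]
  have hgb : ∀ x, |g x| ≤ Cb := by
    intro x
    exact habs _ (hKhm.comp (measurable_const.sub measurable_id)) (fun z => hRb x z)
  set c : ℝ := ∫ w, (∫ z, R w z * f₀ z) * f₀ w with hcdef
  have hceq : c = ∫ w, g w * f₀ w := rfl
  have hgf_int : Integrable (fun w => g w * f₀ w) :=
    hf₀int.bdd_mul (c := Cb) hgm.aestronglyMeasurable
      (ae_of_all _ fun w => by simpa [Real.norm_eq_abs] using hgb w)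
  have hcb : |c| ≤ Cb := by rw [hceq]; exact habs g hgm hgb
  set q : ℝ → ℝ → ℝ := pi2 f₀ R with hqdef
  have hq_eq : ∀ x y, q x y = R x y - g x - g y + c := fun x y => rfl
  have hqm : Measurable (fun p : ℝ × ℝ => q p.1 p.2) := by
    have : (fun p : ℝ × ℝ => q p.1 p.2)
        = fun p => R p.1 p.2 - g p.1 - g p.2 + c := funext fun p => hq_eq _ _
    rw [this]
    exact ((hRm.sub (hgm.comp measurable_fst)).sub (hgm.comp measurable_snd)).add
      measurable_const
  set Cq : ℝ := Cb + Cb + Cb + Cb with hCqdef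
  have hCq0 : 0 ≤ Cq := by positivity
  have hqb : ∀ x y, |q x y| ≤ Cq := by
    intro x y
    rw [hq_eq]
    calc |R x y - g x - g y + c| ≤ |R x y - g x - g y| + |c| := abs_add_le _ _
      _ ≤ (|R x y - g x| + |g y|) + |c| := by
          exact add_le_add_left (abs_sub _ _) _
      _ ≤ ((|R x y| + |g x|) + |g y|) + |c| := by
          exact add_le_add_left (add_le_add_left (abs_sub _ _) _) _
      _ ≤ Cq := by
          rw [hCqdef]
          have := hRb x y; have := hgb x; have := hgb y; have := hcb
          linarith
  have hqsym : ∀ x y, q x y = q y x := by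
    intro x y; rw [hq_eq, hq_eq, hRsym]; ring
  have hq0 : ∀ x, ∫ z, q x z ∂μ = 0 := by
    intro x
    rw [hμ]
    have hrw : (fun z => f₀ z * q x z)
        = fun z => ((R x z * f₀ z - g x * f₀ z) - g z * f₀ z) + c * f₀ z :=
      funext fun z => by rw [hq_eq]; ring
    have i1 : Integrable (fun z => R x z * f₀ z) := hRf_int x
    have i2 : Integrable (fun z => g x * f₀ z) := hf₀int.const_mul _
    have i3 : Integrable (fun z => g z * f₀ z) := hgf_int
    have i4 : Integrable (fun z => c * f₀ z) := hf₀int.const_mul _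
    have i12 : Integrable (fun z => R x z * f₀ z - g x * f₀ z) := i1.sub i2
    have i123 : Integrable (fun z => R x z * f₀ z - g x * f₀ z - g z * f₀ z) := i12.sub i3
    rw [hrw, integral_add i123 i4, integral_sub i12 i3,
      integral_sub i1 i2, integral_const_mul, integral_const_mul, hf₀1]
    have h2 : ∫ z, g z * f₀ z = c := hceq.symm
    have h3 : ∫ z, R x z * f₀ z = g x := rfl
    rw [h2, h3]; ring
  -- pair law
  have hpair : ∀ i j, i ≠ j → Measure.map (fun ω => (X i ω, X j ω)) P = μ.prod μ := by
    intro i j hij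
    have h1 := hindep.indepFun hij
    rw [indepFun_iff_map_prod_eq_prod_map_map (hXm i).aemeasurable (hXm j).aemeasurable] at h1
    rw [h1, hlaw, hlaw]
  set V2 : ℝ := ∫ p : ℝ × ℝ, q p.1 p.2 ^ 2 ∂(μ.prod μ) with hV2def
  have hdiag : ∀ i j, i ≠ j → ∫ ω, q (X i ω) (X j ω) ^ 2 ∂P = V2 := by
    intro i j hij
    have h1 : ∫ ω, q (X i ω) (X j ω) ^ 2 ∂P
        = ∫ p : ℝ × ℝ, q p.1 p.2 ^ 2 ∂(Measure.map (fun ω => (X i ω, X j ω)) P) := by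
      rw [integral_map ((hXm i).prodMk (hXm j)).aemeasurable
        ((hqm.pow_const 2).aestronglyMeasurable)]
    rw [h1, hpair i j hij]
  have hcross : ∀ i j k m : ℕ, m ≠ i → m ≠ j → m ≠ k →
      ∫ ω, q (X i ω) (X j ω) * q (X k ω) (X m ω) ∂P = 0 := by
    intro i j k m hmi hmj hmk
    set V : Ω → (ℝ × ℝ) × ℝ := fun ω => ((X i ω, X j ω), X k ω) with hVdef
    have hVm : Measurable V := ((hXm i).prodMk (hXm j)).prodMk (hXm k)
    have hVind : IndepFun V (X m) P := indep_triple' P X hXm hindep i j k m hmi hmj hmk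
    have hmapV : Measure.map (fun ω => (V ω, X m ω)) P = (Measure.map V P).prod μ := by
      rw [← hlaw m]
      exact (indepFun_iff_map_prod_eq_prod_map_map hVm.aemeasurable
        (hXm m).aemeasurable).mp hVind
    haveI : IsProbabilityMeasure (Measure.map V P) := Measure.isProbabilityMeasure_map hVm.aemeasurable
    set F : ((ℝ × ℝ) × ℝ) × ℝ → ℝ := fun p => q p.1.1.1 p.1.1.2 * q p.1.2 p.2 with hFdef
    have hFm : Measurable F := by
      apply Measurable.mul
      · exact hqm.comp ((measurable_fst.comp (measurable_fst.comp measurable_fst)).prodMk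
          (measurable_snd.comp (measurable_fst.comp measurable_fst)))
      · exact hqm.comp ((measurable_snd.comp measurable_fst).prodMk measurable_snd)
    have hFb : ∀ p, |F p| ≤ Cq * Cq := by
      intro p
      calc |q p.1.1.1 p.1.1.2 * q p.1.2 p.2| = |q p.1.1.1 p.1.1.2| * |q p.1.2 p.2| :=
            abs_mul _ _
        _ ≤ Cq * Cq := mul_le_mul (hqb _ _) (hqb _ _) (abs_nonneg _) hCq0
    have step1 : ∫ ω, q (X i ω) (X j ω) * q (X k ω) (X m ω) ∂P
        = ∫ p, F p ∂(Measure.map (fun ω => (V ω, X m ω)) P) := by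
      rw [integral_map (hVm.prodMk (hXm m)).aemeasurable hFm.aestronglyMeasurable]
    rw [step1, hmapV, integral_prod F (integrable_of_bdd' hFm hFb)]
    have hz : ∀ v : (ℝ × ℝ) × ℝ, ∫ z, F (v, z) ∂μ = 0 := by
      intro v
      have hv : (fun z => F (v, z)) = fun z => q v.1.1 v.1.2 * q v.2 z := rfl
      rw [hv, integral_const_mul, hq0 v.2, mul_zero]
    simp only [hz, integral_zero]
  -- expansion of the square
  set Pn : Finset (ℕ × ℕ) := (Finset.range n ×ˢ Finset.range n).filter (fun p => p.1 < p.2)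
    with hPndef
  set Y : ℕ × ℕ → Ω → ℝ := fun p ω => q (X p.1 ω) (X p.2 ω) with hYdef
  have hYm : ∀ p : ℕ × ℕ, Measurable (Y p) := fun p =>
    hqm.comp ((hXm p.1).prodMk (hXm p.2))
  have hYint : ∀ p r : ℕ × ℕ, Integrable (fun ω => Y p ω * Y r ω) P := by
    intro p r
    refine integrable_of_bdd' ((hYm p).mul (hYm r)) (C := Cq * Cq) fun ω => ?_
    rw [abs_mul]
    exact mul_le_mul (hqb _ _) (hqb _ _) (abs_nonneg _) hCq0
  set cn : ℝ := 2 / ((n : ℝ) * ((n : ℝ) - 1)) with hcndef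
  have hU2 : ∀ ω, U2 q n X ω = cn * ∑ p ∈ Pn, Y p ω := by
    intro ω
    rw [U2, sum_pairs']
  have hsq : ∫ ω, (U2 q n X ω) ^ 2 ∂P
      = cn ^ 2 * ∑ p ∈ Pn, ∑ r ∈ Pn, ∫ ω, Y p ω * Y r ω ∂P := by
    have h1 : ∀ ω, (U2 q n X ω) ^ 2 = cn ^ 2 * ∑ p ∈ Pn, ∑ r ∈ Pn, Y p ω * Y r ω := by
      intro ω
      rw [hU2, mul_pow, sq (∑ p ∈ Pn, Y p ω), Finset.sum_mul_sum]
    rw [integral_congr_ae (ae_of_all _ h1), integral_const_mul]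
    congr 1
    rw [integral_finset_sum _ fun p _ => integrable_finset_sum _ fun r _ => hYint p r]
    exact Finset.sum_congr rfl fun p _ => integral_finset_sum _ fun r _ => hYint p r
  have hdiagsum : ∑ p ∈ Pn, ∑ r ∈ Pn, ∫ ω, Y p ω * Y r ω ∂P = (Pn.card : ℝ) * V2 := by
    have hrow : ∀ p ∈ Pn, (∑ r ∈ Pn, ∫ ω, Y p ω * Y r ω ∂P) = V2 := by
      intro p hp
      have hp2 : p.1 < p.2 := (Finset.mem_filter.mp hp).2
      rw [Finset.sum_eq_single_of_mem p hp]
      · have h5 : (fun ω => Y p ω * Y p ω) = fun ω => q (X p.1 ω) (X p.2 ω) ^ 2 :=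
          funext fun ω => (sq _).symm
        rw [h5]
        exact hdiag p.1 p.2 (Nat.ne_of_lt hp2)
      · intro r hr hrp
        have hr2 : r.1 < r.2 := (Finset.mem_filter.mp hr).2
        have h3 : ¬(r.1 = p.1 ∧ r.2 = p.2) := fun hc => hrp (Prod.ext hc.1 hc.2)
        have hfacts : (r.2 ≠ p.1 ∧ r.2 ≠ p.2 ∧ r.2 ≠ r.1) ∨
            (r.1 ≠ p.1 ∧ r.1 ≠ p.2 ∧ r.1 ≠ r.2) := by omega
        rcases hfacts with ⟨ha, hb, hc⟩ | ⟨ha, hb, hc⟩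
        · exact hcross p.1 p.2 r.1 r.2 ha hb hc
        · have hsw : (fun ω => Y p ω * Y r ω)
              = fun ω => q (X p.1 ω) (X p.2 ω) * q (X r.2 ω) (X r.1 ω) := by
            funext ω
            show q (X p.1 ω) (X p.2 ω) * q (X r.1 ω) (X r.2 ω) = _
            rw [hqsym (X r.1 ω) (X r.2 ω)]
          rw [hsw]
          exact hcross p.1 p.2 r.2 r.1 ha hb hc
    rw [Finset.sum_congr rfl hrow, Finset.sum_const, nsmul_eq_mul]
  have hcard : (Pn.card : ℝ) * 2 = (n : ℝ) * ((n : ℝ) - 1) := by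
    have h1 : Pn.card * 2 = n * (n - 1) := by
      have h2 : Pn.card = ∑ i ∈ Finset.range n, ∑ j ∈ Finset.Ico (i + 1) n, 1 := by
        rw [sum_pairs' n (fun _ _ => 1), Finset.card_eq_sum_ones]
      rw [h2]
      simp only [Finset.sum_const, Nat.card_Ico, smul_eq_mul, mul_one]
      have h3 : ∀ i ∈ Finset.range n, n - (i + 1) = n - 1 - i := fun i _ => by omega
      rw [Finset.sum_congr rfl h3, Finset.sum_range_reflect (fun i => i) n,
        Finset.sum_range_id_mul_two]
    have h4 : ((Pn.card * 2 : ℕ) : ℝ) = ((n * (n - 1) : ℕ) : ℝ) := by rw [h1]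
    push_cast [Nat.cast_sub (show 1 ≤ n by omega)] at h4
    linarith
  have hV2bound : V2 ≤ (∫ x, f₀ x ^ 2) * (h⁻¹ * ∫ x, K x ^ 2) := by
    -- Step 1: V2 ≤ ∫ R² over μ ⊗ μ
    have hq0' : ∀ y, ∫ x, q x y ∂μ = 0 := by
      intro y
      have e : (fun x => q x y) = fun x => q y x := funext fun x => hqsym x y
      rw [e, hq0 y]
    have hqprod_int : Integrable (fun p : ℝ × ℝ => q p.1 p.2) (μ.prod μ) :=
      integrable_of_bdd' hqm (fun p => hqb p.1 p.2)
    have hint1 : Integrable (fun p : ℝ × ℝ => g p.1 * q p.1 p.2) (μ.prod μ) := by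
      refine integrable_of_bdd' ((hgm.comp measurable_fst).mul hqm) (C := Cb * Cq) fun p => ?_
      rw [abs_mul]
      exact mul_le_mul (hgb _) (hqb _ _) (abs_nonneg _) hCb0
    have hint2 : Integrable (fun p : ℝ × ℝ => g p.2 * q p.1 p.2) (μ.prod μ) := by
      refine integrable_of_bdd' ((hgm.comp measurable_snd).mul hqm) (C := Cb * Cq) fun p => ?_
      rw [abs_mul]
      exact mul_le_mul (hgb _) (hqb _ _) (abs_nonneg _) hCb0
    have T1 : ∫ p : ℝ × ℝ, g p.1 * q p.1 p.2 ∂(μ.prod μ) = 0 := by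
      rw [integral_prod _ hint1]
      have e : ∀ x, ∫ y, g x * q x y ∂μ = 0 := fun x => by
        rw [integral_const_mul, hq0 x, mul_zero]
      simp only [e, integral_zero]
    have T2 : ∫ p : ℝ × ℝ, g p.2 * q p.1 p.2 ∂(μ.prod μ) = 0 := by
      rw [integral_prod_symm _ hint2]
      have e : ∀ y, ∫ x, g y * q x y ∂μ = 0 := fun y => by
        rw [integral_const_mul, hq0' y, mul_zero]
      simp only [e, integral_zero]
    have T3 : ∫ p : ℝ × ℝ, q p.1 p.2 ∂(μ.prod μ) = 0 := by
      rw [integral_prod _ hqprod_int]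
      simp only [hq0, integral_zero]
    have hqs : ∫ p : ℝ × ℝ, q p.1 p.2 * (g p.1 + g p.2 - c) ∂(μ.prod μ) = 0 := by
      have hdec : (fun p : ℝ × ℝ => q p.1 p.2 * (g p.1 + g p.2 - c))
          = fun p => (g p.1 * q p.1 p.2 + g p.2 * q p.1 p.2) - c * q p.1 p.2 :=
        funext fun p => by ring
      have hint12 : Integrable (fun p : ℝ × ℝ => g p.1 * q p.1 p.2 + g p.2 * q p.1 p.2)
          (μ.prod μ) := hint1.add hint2
      rw [hdec, integral_sub hint12 (hqprod_int.const_mul c),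
        integral_add hint1 hint2, T1, T2, integral_const_mul, T3]
      ring
    have hint_q2 : Integrable (fun p : ℝ × ℝ => q p.1 p.2 ^ 2) (μ.prod μ) := by
      refine integrable_of_bdd' (hqm.pow_const 2) (C := Cq ^ 2) fun p => ?_
      rw [abs_pow]
      exact pow_le_pow_left₀ (abs_nonneg _) (hqb _ _) 2
    have hint_qs : Integrable (fun p : ℝ × ℝ => q p.1 p.2 * (g p.1 + g p.2 - c))
        (μ.prod μ) := by
      refine integrable_of_bdd' (hqm.mul (((hgm.comp measurable_fst).add
        (hgm.comp measurable_snd)).sub measurable_const))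
        (C := Cq * (Cb + Cb + Cb)) fun p => ?_
      rw [abs_mul]
      refine mul_le_mul (hqb _ _) ?_ (abs_nonneg _) hCq0
      calc |g p.1 + g p.2 - c| ≤ |g p.1 + g p.2| + |c| := abs_sub _ _
        _ ≤ |g p.1| + |g p.2| + |c| := add_le_add_left (abs_add_le _ _) _
        _ ≤ Cb + Cb + Cb := by
            have := hgb p.1; have := hgb p.2; have := hcb; linarith
    have hint_s2 : Integrable (fun p : ℝ × ℝ => (g p.1 + g p.2 - c) ^ 2) (μ.prod μ) := by
      refine integrable_of_bdd' ((((hgm.comp measurable_fst).add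
        (hgm.comp measurable_snd)).sub measurable_const).pow_const 2)
        (C := (Cb + Cb + Cb) ^ 2) fun p => ?_
      rw [abs_pow]
      refine pow_le_pow_left₀ (abs_nonneg _) ?_ 2
      calc |g p.1 + g p.2 - c| ≤ |g p.1 + g p.2| + |c| := abs_sub _ _
        _ ≤ |g p.1| + |g p.2| + |c| := add_le_add_left (abs_add_le _ _) _
        _ ≤ Cb + Cb + Cb := by
            have := hgb p.1; have := hgb p.2; have := hcb; linarith
    have hR2int : Integrable (fun p : ℝ × ℝ => R p.1 p.2 ^ 2) (μ.prod μ) := by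
      refine integrable_of_bdd' (hRm.pow_const 2) (C := Cb ^ 2) fun p => ?_
      rw [abs_pow]
      exact pow_le_pow_left₀ (abs_nonneg _) (hRb _ _) 2
    have hRq : ∀ p : ℝ × ℝ, R p.1 p.2 ^ 2
        = q p.1 p.2 ^ 2 + (2 * (q p.1 p.2 * (g p.1 + g p.2 - c))
            + (g p.1 + g p.2 - c) ^ 2) := by
      intro p
      rw [hq_eq]; ring
    have hV2le : V2 ≤ ∫ p : ℝ × ℝ, R p.1 p.2 ^ 2 ∂(μ.prod μ) := by
      have e1 : ∫ p : ℝ × ℝ, R p.1 p.2 ^ 2 ∂(μ.prod μ)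
          = V2 + (2 * (∫ p : ℝ × ℝ, q p.1 p.2 * (g p.1 + g p.2 - c) ∂(μ.prod μ))
              + ∫ p : ℝ × ℝ, (g p.1 + g p.2 - c) ^ 2 ∂(μ.prod μ)) := by
        have hint_rest : Integrable (fun p : ℝ × ℝ =>
            2 * (q p.1 p.2 * (g p.1 + g p.2 - c)) + (g p.1 + g p.2 - c) ^ 2)
            (μ.prod μ) := (hint_qs.const_mul 2).add hint_s2
        rw [integral_congr_ae (ae_of_all _ hRq),
          integral_add hint_q2 hint_rest,
          integral_add (hint_qs.const_mul 2) hint_s2, integral_const_mul, hV2def]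
      have e2 : 0 ≤ ∫ p : ℝ × ℝ, (g p.1 + g p.2 - c) ^ 2 ∂(μ.prod μ) :=
        integral_nonneg fun p => sq_nonneg _
      rw [e1, hqs]
      linarith
    -- Step 2: pass to Lebesgue double integral
    have hf₀sq : Integrable (fun x => f₀ x ^ 2) := hL2.integrable_sq
    have step : ∫ p : ℝ × ℝ, R p.1 p.2 ^ 2 ∂(μ.prod μ)
        = ∫ x, f₀ x * ∫ y, f₀ y * R x y ^ 2 := by
      rw [integral_prod _ hR2int, hμ]
      refine integral_congr_ae (ae_of_all _ fun x => ?_)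
      simp only
      rw [hμ (fun y => R x y ^ 2)]
    -- kernel L² facts
    have hKsqint : Integrable (fun x => K x ^ 2) := by
      have h1 := hKint.bdd_mul (c := B) hKm.aestronglyMeasurable
        (ae_of_all _ fun x => by simpa [Real.norm_eq_abs] using hB x)
      simpa [sq] using h1
    have hKhsq_eq : (fun t => Kh K h t ^ 2) = fun t => (h⁻¹) ^ 2 * K (t / h) ^ 2 :=
      funext fun t => by simp only [Kh]; ring
    have hKhsqint : Integrable (fun t => Kh K h t ^ 2) := by
      rw [hKhsq_eq]; exact (hKsqint.comp_div hh').const_mul _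
    have hIKh2 : ∫ t, Kh K h t ^ 2 = h⁻¹ * ∫ x, K x ^ 2 := by
      rw [hKhsq_eq, integral_const_mul,
        Measure.integral_comp_div (fun x => K x ^ 2) h, abs_of_pos hh, smul_eq_mul]
      field_simp
    have htrans : ∀ x : ℝ, ∫ y, Kh K h (x - y) ^ 2 = ∫ t, Kh K h t ^ 2 := fun x =>
      integral_sub_left_eq_self (fun t => Kh K h t ^ 2) volume x
    have htransInt : ∀ x : ℝ, Integrable (fun y => Kh K h (x - y) ^ 2) := fun x =>
      hKhsqint.comp_sub_left x
    -- joint integrability for Fubini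
    have hGm : Measurable (fun p : ℝ × ℝ => f₀ p.1 ^ 2 * Kh K h (p.2 - p.1) ^ 2) :=
      ((hf₀m.comp measurable_fst).pow_const 2).mul
        ((hKhm.comp (measurable_snd.sub measurable_fst)).pow_const 2)
    have hG : Integrable (fun p : ℝ × ℝ => f₀ p.1 ^ 2 * Kh K h (p.2 - p.1) ^ 2)
        (volume.prod volume) := by
      refine (integrable_prod_iff hGm.aestronglyMeasurable).mpr ⟨?_, ?_⟩
      · refine ae_of_all _ fun a => ?_
        simp only
        exact (hKhsqint.comp_sub_right a).const_mul _
      · have he : (fun a => ∫ b, ‖f₀ a ^ 2 * Kh K h (b - a) ^ 2‖)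
            = fun a => f₀ a ^ 2 * ∫ t, Kh K h t ^ 2 := by
          funext a
          have e2 : (fun b => ‖f₀ a ^ 2 * Kh K h (b - a) ^ 2‖)
              = fun b => f₀ a ^ 2 * Kh K h (b - a) ^ 2 := funext fun b => by
            rw [Real.norm_eq_abs, abs_of_nonneg (mul_nonneg (sq_nonneg _) (sq_nonneg _))]
          rw [e2, integral_const_mul]
          congr 1
          exact integral_sub_right_eq_self (fun t => Kh K h t ^ 2) a
        rw [he]
        exact hf₀sq.mul_const _
    have hFprod : Integrable (fun p : ℝ × ℝ => f₀ p.2 ^ 2 * Kh K h (p.1 - p.2) ^ 2)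
        (volume.prod volume) := by
      have h2 := hG.swap
      exact h2
    have hswapint : ∫ x, ∫ y, f₀ y ^ 2 * Kh K h (x - y) ^ 2
        = (∫ x, f₀ x ^ 2) * ∫ t, Kh K h t ^ 2 := by
      rw [integral_integral_swap (by exact hFprod)]
      have e : ∀ y, ∫ x, f₀ y ^ 2 * Kh K h (x - y) ^ 2 = f₀ y ^ 2 * ∫ t, Kh K h t ^ 2 := by
        intro y
        rw [integral_const_mul]
        congr 1
        exact integral_sub_right_eq_self (fun t => Kh K h t ^ 2) y
      simp only [e]
      rw [integral_mul_const]
    -- pointwise bound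
    have hinner_nonneg : ∀ x, 0 ≤ ∫ y, f₀ y * R x y ^ 2 := fun x =>
      integral_nonneg fun y => mul_nonneg (hf₀nn y) (sq_nonneg _)
    have hix2 : ∀ x : ℝ, Integrable (fun y => f₀ y ^ 2 * Kh K h (x - y) ^ 2) := by
      intro x
      have hm2 : Measurable fun y : ℝ => Kh K h (x - y) ^ 2 :=
        (hKhm.comp (measurable_id.const_sub x)).pow_const 2
      have h2 := hf₀sq.bdd_mul (c := Cb ^ 2) hm2.aestronglyMeasurable
        (ae_of_all _ fun y => by
          rw [Real.norm_eq_abs, abs_pow]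
          exact pow_le_pow_left₀ (abs_nonneg _) (hKhb _) 2)
      exact h2.congr (ae_of_all _ fun y => mul_comm _ _)
    have hptw : ∀ x, f₀ x * ∫ y, f₀ y * R x y ^ 2
        ≤ (f₀ x ^ 2 * (∫ t, Kh K h t ^ 2) + ∫ y, f₀ y ^ 2 * Kh K h (x - y) ^ 2) / 2 := by
      intro x
      have hix1 : Integrable (fun y => f₀ x ^ 2 * Kh K h (x - y) ^ 2) :=
        (htransInt x).const_mul _
      have hle : ∀ y, f₀ x * (f₀ y * R x y ^ 2)
          ≤ (f₀ x ^ 2 * Kh K h (x - y) ^ 2 + f₀ y ^ 2 * Kh K h (x - y) ^ 2) / 2 := by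
        intro y
        have hRxy : R x y = Kh K h (x - y) := rfl
        rw [hRxy]
        nlinarith [mul_nonneg (sq_nonneg (f₀ x - f₀ y)) (sq_nonneg (Kh K h (x - y)))]
      calc f₀ x * ∫ y, f₀ y * R x y ^ 2 = ∫ y, f₀ x * (f₀ y * R x y ^ 2) :=
            (integral_const_mul _ _).symm
        _ ≤ ∫ y, (f₀ x ^ 2 * Kh K h (x - y) ^ 2 + f₀ y ^ 2 * Kh K h (x - y) ^ 2) / 2 :=
            integral_mono_of_nonneg
              (ae_of_all _ fun y => mul_nonneg (hf₀nn x)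
                (mul_nonneg (hf₀nn y) (sq_nonneg _)))
              ((hix1.add (hix2 x)).div_const 2) (ae_of_all _ hle)
        _ = (f₀ x ^ 2 * (∫ t, Kh K h t ^ 2) + ∫ y, f₀ y ^ 2 * Kh K h (x - y) ^ 2) / 2 := by
            rw [integral_div, integral_add hix1 (hix2 x), integral_const_mul, htrans x]
    have hip : Integrable (fun x => ∫ y, f₀ y ^ 2 * Kh K h (x - y) ^ 2) := by
      simpa using hFprod.integral_prod_left
    have hRHSint : Integrable (fun x =>
        (f₀ x ^ 2 * (∫ t, Kh K h t ^ 2) + ∫ y, f₀ y ^ 2 * Kh K h (x - y) ^ 2) / 2) :=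
      ((hf₀sq.mul_const _).add hip).div_const 2
    have houter : ∫ x, f₀ x * ∫ y, f₀ y * R x y ^ 2
        ≤ ∫ x, (f₀ x ^ 2 * (∫ t, Kh K h t ^ 2)
            + ∫ y, f₀ y ^ 2 * Kh K h (x - y) ^ 2) / 2 :=
      integral_mono_of_nonneg
        (ae_of_all _ fun x => mul_nonneg (hf₀nn x) (hinner_nonneg x)) hRHSint
        (ae_of_all _ hptw)
    have hRHSval : ∫ x, (f₀ x ^ 2 * (∫ t, Kh K h t ^ 2)
          + ∫ y, f₀ y ^ 2 * Kh K h (x - y) ^ 2) / 2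
        = (∫ x, f₀ x ^ 2) * ∫ t, Kh K h t ^ 2 := by
      rw [integral_div, integral_add (hf₀sq.mul_const _) hip, integral_mul_const, hswapint]
      ring
    calc V2 ≤ ∫ p : ℝ × ℝ, R p.1 p.2 ^ 2 ∂(μ.prod μ) := hV2le
      _ = ∫ x, f₀ x * ∫ y, f₀ y * R x y ^ 2 := step
      _ ≤ (∫ x, f₀ x ^ 2) * ∫ t, Kh K h t ^ 2 := by rw [← hRHSval]; exact houter
      _ = (∫ x, f₀ x ^ 2) * (h⁻¹ * ∫ x, K x ^ 2) := by rw [hIKh2]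
  have hN : (0 : ℝ) < (n : ℝ) * ((n : ℝ) - 1) := by
    have h2n : (2 : ℝ) ≤ (n : ℝ) := by exact_mod_cast hn
    nlinarith
  rw [hsq, hdiagsum]
  calc cn ^ 2 * ((Pn.card : ℝ) * V2)
      ≤ cn ^ 2 * ((Pn.card : ℝ) * ((∫ x, f₀ x ^ 2) * (h⁻¹ * ∫ x, K x ^ 2))) := by
        apply mul_le_mul_of_nonneg_left _ (sq_nonneg cn)
        exact mul_le_mul_of_nonneg_left hV2bound (Nat.cast_nonneg _)
    _ = 2 * (∫ x, f₀ x ^ 2) * (∫ x, K x ^ 2) / ((n : ℝ) * ((n : ℝ) - 1) * h) := by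
        have hcard2 : (Pn.card : ℝ) = (n : ℝ) * ((n : ℝ) - 1) / 2 := by linarith
        rw [hcndef, hcard2]
        field_simp

end
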